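/- Let M be a linear operator on R^d with ||M|| ≤ 1. Then for every unit vector u and every n ≥ 1, ||M^n u||^2 - ||M^{n+1} u||^2 ≤ rank(M)/n ≤ d/n. -/

import Mathlib

open Matrix Finset

namespace DecreaseRankAux

variable {d : ℕ}

lemma dot_self_nonneg' (v : Fin d → ℝ) : 0 ≤ v ⬝ᵥ v :=
  Finset.sum_nonneg fun i _ => mul_self_nonneg _

lemma dot_sq_le (v w : Fin d → ℝ) : (v ⬝ᵥ w) ^ 2 ≤ (v ⬝ᵥ v) * (w ⬝ᵥ w) := by
  have h := Finset.sum_mul_sq_le_sq_mul_sq Finset.univ v w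
  simp only [dotProduct]
  calc (∑ i, v i * w i) ^ 2 ≤ (∑ i, v i ^ 2) * (∑ i, w i ^ 2) := h
    _ = (∑ i, v i * v i) * (∑ i, w i * w i) := by simp [sq]

lemma transpose_contraction {A : Matrix (Fin d) (Fin d) ℝ}
    (hA : ∀ v, (A *ᵥ v) ⬝ᵥ (A *ᵥ v) ≤ v ⬝ᵥ v) (v : Fin d → ℝ) :
    (Aᵀ *ᵥ v) ⬝ᵥ (Aᵀ *ᵥ v) ≤ v ⬝ᵥ v := by
  set w := Aᵀ *ᵥ v with hw
  have h1 : w ⬝ᵥ w = (A *ᵥ w) ⬝ᵥ v := by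
    conv_lhs => rw [hw, Matrix.dotProduct_mulVec, Matrix.vecMul_transpose]
  have h2 : ((A *ᵥ w) ⬝ᵥ v) ^ 2 ≤ ((A *ᵥ w) ⬝ᵥ (A *ᵥ w)) * (v ⬝ᵥ v) := dot_sq_le _ _
  have h3 := hA w
  have h4 := dot_self_nonneg' w
  have h5 := dot_self_nonneg' v
  nlinarith [h1, h2, h3, h4, h5]

lemma trace_transpose_mul (C : Matrix (Fin d) (Fin d) ℝ) :
    (Cᵀ * C).trace = ∑ j, C j ⬝ᵥ C j := by
  simp only [Matrix.trace, Matrix.diag, Matrix.mul_apply, Matrix.transpose_apply, dotProduct]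
  exact Finset.sum_comm

lemma dot_tm (A : Matrix (Fin d) (Fin d) ℝ) (v : Fin d → ℝ) :
    v ⬝ᵥ ((Aᵀ * A) *ᵥ v) = (A *ᵥ v) ⬝ᵥ (A *ᵥ v) := by
  rw [← Matrix.mulVec_mulVec, Matrix.dotProduct_mulVec, Matrix.vecMul_transpose]

lemma quadform_le_trace (C : Matrix (Fin d) (Fin d) ℝ) (v : Fin d → ℝ) :
    (C *ᵥ v) ⬝ᵥ (C *ᵥ v) ≤ (Cᵀ * C).trace * (v ⬝ᵥ v) := by
  rw [trace_transpose_mul, Finset.sum_mul]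
  have h1 : (C *ᵥ v) ⬝ᵥ (C *ᵥ v) = ∑ i, (C i ⬝ᵥ v) * (C i ⬝ᵥ v) := by
    simp [dotProduct, Matrix.mulVec]
  rw [h1]
  refine Finset.sum_le_sum fun i _ => ?_
  have h2 := dot_sq_le (C i) v
  nlinarith [h2]

lemma trace_conj_le {A : Matrix (Fin d) (Fin d) ℝ}
    (hA : ∀ v, (A *ᵥ v) ⬝ᵥ (A *ᵥ v) ≤ v ⬝ᵥ v) (C : Matrix (Fin d) (Fin d) ℝ) :
    ((C * A)ᵀ * (C * A)).trace ≤ (Cᵀ * C).trace := by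
  rw [trace_transpose_mul, trace_transpose_mul]
  refine Finset.sum_le_sum fun j _ => ?_
  have hrow : (C * A) j = Aᵀ *ᵥ C j := by
    funext i
    simp [Matrix.mul_apply, Matrix.mulVec, dotProduct, Matrix.transpose_apply, mul_comm]
  rw [hrow]
  exact transpose_contraction hA (C j)

lemma trace_le_rank {A : Matrix (Fin d) (Fin d) ℝ}
    (hA : ∀ v, (A *ᵥ v) ⬝ᵥ (A *ᵥ v) ≤ v ⬝ᵥ v) :
    (Aᵀ * A).trace ≤ (A.rank : ℝ) := by
  classical
  have hH : (Aᵀ * A).IsHermitian := by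
    have h := Matrix.isHermitian_conjTranspose_mul_self A
    rwa [Matrix.conjTranspose_eq_transpose_of_trivial] at h
  have htr : (Aᵀ * A).trace = ∑ i, hH.eigenvalues i := by
    nth_rewrite 1 [hH.spectral_theorem]
    rw [Unitary.conjStarAlgAut_apply]
    rw [Matrix.trace_mul_comm, ← mul_assoc]
    have h1 : star (hH.eigenvectorUnitary : Matrix (Fin d) (Fin d) ℝ) *
        (hH.eigenvectorUnitary : Matrix (Fin d) (Fin d) ℝ) = 1 :=
      (Matrix.mem_unitaryGroup_iff').mp (hH.eigenvectorUnitary).2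
    rw [h1, one_mul, Matrix.trace_diagonal]
    simp [Function.comp]
  have hle : ∀ i, hH.eigenvalues i ≤ 1 := by
    intro i
    have hv := hH.eigenvalues_eq i
    have hstar : (star ⇑(hH.eigenvectorBasis i) : Fin d → ℝ) = ⇑(hH.eigenvectorBasis i) := by
      funext j; simp
    rw [hstar] at hv
    have h2 : ‖hH.eigenvectorBasis i‖ = 1 := hH.eigenvectorBasis.orthonormal.1 i
    have h3 : ‖hH.eigenvectorBasis i‖ ^ 2 = 1 := by rw [h2]; norm_num
    rw [EuclideanSpace.norm_eq, Real.sq_sqrt (by positivity)] at h3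
    have hnorm : (⇑(hH.eigenvectorBasis i) : Fin d → ℝ) ⬝ᵥ ⇑(hH.eigenvectorBasis i) = 1 := by
      simpa [dotProduct, sq] using h3
    have h4 : (⇑(hH.eigenvectorBasis i) : Fin d → ℝ) ⬝ᵥ ((Aᵀ * A) *ᵥ ⇑(hH.eigenvectorBasis i)) ≤ 1 := by
      rw [dot_tm, ← hnorm]
      exact hA _
    calc hH.eigenvalues i
        = (⇑(hH.eigenvectorBasis i) : Fin d → ℝ) ⬝ᵥ ((Aᵀ * A) *ᵥ ⇑(hH.eigenvectorBasis i)) := by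
          simpa using hv
      _ ≤ 1 := h4
  have hrk : (Aᵀ * A).rank = Fintype.card {i // hH.eigenvalues i ≠ 0} :=
    hH.rank_eq_card_non_zero_eigs
  have hrank_le : (Aᵀ * A).rank ≤ A.rank := Matrix.rank_mul_le_right Aᵀ A
  rw [htr]
  calc (∑ i, hH.eigenvalues i)
      = ∑ i ∈ Finset.univ.filter (fun i => hH.eigenvalues i ≠ 0), hH.eigenvalues i :=
        (Finset.sum_filter_ne_zero Finset.univ).symm
    _ ≤ ∑ _i ∈ Finset.univ.filter (fun i => hH.eigenvalues i ≠ 0), (1 : ℝ) :=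
        Finset.sum_le_sum fun i _ => hle i
    _ = ((Finset.univ.filter (fun i => hH.eigenvalues i ≠ 0)).card : ℝ) := by simp
    _ = ((Aᵀ * A).rank : ℝ) := by rw [hrk, Fintype.card_subtype]
    _ ≤ (A.rank : ℝ) := by exact_mod_cast hrank_le

end DecreaseRankAux

open DecreaseRankAux Matrix in
theorem decrease_bounded_by_rank (d : ℕ)
    (M : EuclideanSpace ℝ (Fin d) →L[ℝ] EuclideanSpace ℝ (Fin d))
    (hM : ‖M‖ ≤ 1) (u : EuclideanSpace ℝ (Fin d)) (hu : ‖u‖ = 1)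
    (n : ℕ) (hn : 1 ≤ n) :
    ‖(M ^ n) u‖ ^ 2 - ‖(M ^ (n + 1)) u‖ ^ 2
        ≤ (Module.finrank ℝ (LinearMap.range M.toLinearMap) : ℝ) / n
      ∧ (Module.finrank ℝ (LinearMap.range M.toLinearMap) : ℝ) / n ≤ (d : ℝ) / n := by
  classical
  have hnpos : (0 : ℝ) < n := by exact_mod_cast hn
  set e := WithLp.linearEquiv 2 ℝ (Fin d → ℝ) with he
  have dot_lin : ∀ x : EuclideanSpace ℝ (Fin d), (e x) ⬝ᵥ (e x) = ‖x‖ ^ 2 := by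
    intro x
    rw [EuclideanSpace.norm_eq, Real.sq_sqrt (by positivity)]
    simp [dotProduct, sq, he, WithLp.linearEquiv_apply]
  set A : Matrix (Fin d) (Fin d) ℝ :=
    LinearMap.toMatrix' (e.toLinearMap ∘ₗ M.toLinearMap ∘ₗ e.symm.toLinearMap) with hAdef
  have hbridge : ∀ x : EuclideanSpace ℝ (Fin d), A *ᵥ (e x) = e (M x) := by
    intro x
    have h1 : Matrix.toLin' A = e.toLinearMap ∘ₗ M.toLinearMap ∘ₗ e.symm.toLinearMap :=
      Matrix.toLin'_toMatrix' _
    have h2 := congrArg (fun f => f (e x)) h1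
    simp only [Matrix.toLin'_apply, LinearMap.comp_apply, LinearEquiv.coe_coe,
      LinearEquiv.symm_apply_apply] at h2
    exact h2
  have hcontr : ∀ v : Fin d → ℝ, (A *ᵥ v) ⬝ᵥ (A *ᵥ v) ≤ v ⬝ᵥ v := by
    intro v
    have hx : v = e (e.symm v) := (e.apply_symm_apply v).symm
    rw [hx, hbridge, dot_lin, dot_lin]
    have h1 : ‖M (e.symm v)‖ ≤ ‖e.symm v‖ := by
      calc ‖M (e.symm v)‖ ≤ ‖M‖ * ‖e.symm v‖ := M.le_opNorm _
        _ ≤ 1 * ‖e.symm v‖ := mul_le_mul_of_nonneg_right hM (norm_nonneg _)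
        _ = ‖e.symm v‖ := one_mul _
    exact pow_le_pow_left₀ (norm_nonneg _) h1 2
  have hpow : ∀ k : ℕ, (A ^ k) *ᵥ (e u) = e ((M ^ k) u) := by
    intro k
    induction k with
    | zero => simp
    | succ k ih =>
        rw [pow_succ', ← Matrix.mulVec_mulVec, ih, pow_succ',
          ContinuousLinearMap.mul_apply, hbridge]
  have hT : (1 - Aᵀ * A).PosSemidef := by
    refine Matrix.PosSemidef.of_dotProduct_mulVec_nonneg ?_ ?_
    · have h1 : (Aᵀ * A).IsHermitian := by
        have h := Matrix.isHermitian_conjTranspose_mul_self A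
        rwa [Matrix.conjTranspose_eq_transpose_of_trivial] at h
      exact Matrix.isHermitian_one.sub h1
    · intro x
      have hx : (star x : Fin d → ℝ) = x := by funext j; simp
      rw [hx]
      rw [Matrix.sub_mulVec, dotProduct_sub, Matrix.one_mulVec, dot_tm]
      have h2 := hcontr x
      linarith
  open scoped MatrixOrder in
  obtain ⟨C, hC⟩ := CStarAlgebra.nonneg_iff_eq_star_mul_self.mp hT.nonneg
  rw [Matrix.star_eq_conjTranspose, Matrix.conjTranspose_eq_transpose_of_trivial] at hC
  set t : ℕ → ℝ := fun k => ((C * A ^ k)ᵀ * (C * A ^ k)).trace with ht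
  set g : ℕ → ℝ := fun k => ((A ^ k)ᵀ * (A ^ k)).trace with hg
  have htele : ∀ k, t k = g k - g (k + 1) := by
    intro k
    have hx : (A ^ (k + 1))ᵀ * A ^ (k + 1) = (A ^ k)ᵀ * (Aᵀ * A) * A ^ k := by
      rw [pow_succ', Matrix.transpose_mul]
      noncomm_ring
    have hkey : (C * A ^ k)ᵀ * (C * A ^ k)
        = (A ^ k)ᵀ * A ^ k - (A ^ (k + 1))ᵀ * A ^ (k + 1) := by
      rw [hx, Matrix.transpose_mul]
      have h2 : (A ^ k)ᵀ * Cᵀ * (C * A ^ k) = (A ^ k)ᵀ * (Cᵀ * C) * A ^ k := by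
        noncomm_ring
      rw [h2, ← hC]
      noncomm_ring
    simp only [ht, hg, hkey, Matrix.trace_sub]
  have hmono : ∀ k, t (k + 1) ≤ t k := by
    intro k
    have h1 : C * A ^ (k + 1) = (C * A ^ k) * A := by
      rw [pow_succ]; noncomm_ring
    have h2 := trace_conj_le hcontr (C * A ^ k)
    simpa only [ht, h1] using h2
  have hanti : ∀ j k : ℕ, j ≤ k → t k ≤ t j := by
    intro j k hjk
    induction hjk with
    | refl => exact le_refl _
    | step h ih => exact le_trans (hmono _) ih
  have hsum : ∑ i ∈ Finset.range n, t (i + 1) = g 1 - g (n + 1) := by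
    have h0 := Finset.sum_range_sub' (fun i => g (i + 1)) n
    calc ∑ i ∈ Finset.range n, t (i + 1)
        = ∑ i ∈ Finset.range n, (g (i + 1) - g (i + 1 + 1)) :=
          Finset.sum_congr rfl fun i _ => htele (i + 1)
      _ = g 1 - g (n + 1) := h0
  have hgn : 0 ≤ g (n + 1) := by
    have h1 : g (n + 1) = ∑ j, (A ^ (n + 1)) j ⬝ᵥ (A ^ (n + 1)) j := trace_transpose_mul _
    rw [h1]
    exact Finset.sum_nonneg fun j _ => dot_self_nonneg' _
  have hg1 : g 1 ≤ (A.rank : ℝ) := by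
    have h1 := trace_le_rank hcontr
    simpa [hg, pow_one] using h1
  have htn : t n ≤ (A.rank : ℝ) / n := by
    rw [le_div_iff₀ hnpos]
    have h1 : t n * n = ∑ _i ∈ Finset.range n, t n := by
      rw [Finset.sum_const, Finset.card_range, nsmul_eq_mul, mul_comm]
    rw [h1]
    calc ∑ _i ∈ Finset.range n, t n
        ≤ ∑ i ∈ Finset.range n, t (i + 1) :=
          Finset.sum_le_sum fun i hi =>
            hanti (i + 1) n (Nat.succ_le_of_lt (Finset.mem_range.mp hi))
      _ = g 1 - g (n + 1) := hsum
      _ ≤ g 1 := by linarith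
      _ ≤ (A.rank : ℝ) := hg1
  set x := (A ^ n) *ᵥ (e u) with hxdef
  have hx1 : ‖(M ^ n) u‖ ^ 2 = x ⬝ᵥ x := by rw [hxdef, hpow, dot_lin]
  have hx2 : ‖(M ^ (n + 1)) u‖ ^ 2 = (A *ᵥ x) ⬝ᵥ (A *ᵥ x) := by
    rw [hxdef, Matrix.mulVec_mulVec, ← pow_succ', hpow, dot_lin]
  have hdiff : ‖(M ^ n) u‖ ^ 2 - ‖(M ^ (n + 1)) u‖ ^ 2 = (C *ᵥ x) ⬝ᵥ (C *ᵥ x) := by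
    rw [hx1, hx2,
      show (C *ᵥ x) ⬝ᵥ (C *ᵥ x) = x ⬝ᵥ ((Cᵀ * C) *ᵥ x) from (dot_tm C x).symm, ← hC,
      Matrix.sub_mulVec, dotProduct_sub, Matrix.one_mulVec, dot_tm]
  have hquad : (C *ᵥ x) ⬝ᵥ (C *ᵥ x) ≤ t n := by
    have h1 : C *ᵥ x = (C * A ^ n) *ᵥ (e u) := by rw [hxdef, Matrix.mulVec_mulVec]
    rw [h1]
    have h2 := quadform_le_trace (C * A ^ n) (e u)
    have hu1 : (e u) ⬝ᵥ (e u) = 1 := by rw [dot_lin, hu]; norm_num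
    simpa [ht, hu1] using h2
  have hrkeq : A.rank = Module.finrank ℝ (LinearMap.range M.toLinearMap) := by
    rw [Matrix.rank]
    have h1 : A.mulVecLin = e.toLinearMap ∘ₗ M.toLinearMap ∘ₗ e.symm.toLinearMap := by
      rw [hAdef, ← Matrix.toLin'_apply', Matrix.toLin'_toMatrix']
    rw [h1, LinearMap.range_comp, LinearMap.range_comp, LinearEquiv.range, Submodule.map_top]
    exact LinearEquiv.finrank_map_eq e _
  refine ⟨?_, ?_⟩
  · calc ‖(M ^ n) u‖ ^ 2 - ‖(M ^ (n + 1)) u‖ ^ 2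
        = (C *ᵥ x) ⬝ᵥ (C *ᵥ x) := hdiff
      _ ≤ t n := hquad
      _ ≤ (A.rank : ℝ) / n := htn
      _ = _ := by rw [hrkeq]
  · have hrd : Module.finrank ℝ (LinearMap.range M.toLinearMap) ≤ d := by
      have h := Submodule.finrank_le (LinearMap.range M.toLinearMap)
      rwa [finrank_euclideanSpace_fin] at h
    have hrd' : (Module.finrank ℝ (LinearMap.range M.toLinearMap) : ℝ) ≤ (d : ℝ) := by
      exact_mod_cast hrd
    gcongr
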